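/- The number of monotone matchings of size k between positions [n] and [n] with all pairs off-diagonal is at most C(n,k)², and for a uniformly random string S ∈ Σ^n, the probability that any fixed monotone matching of size k with all pairs (a_i,b_i) satisfying a_i ≠ b_i is realized (i.e., S_{a_i} = S_{b_i} for all i) is at most |Σ|^{-⌈k/2⌉}. -/

import Mathlib

open Finset
open scoped Classical

/-- Counting lemma: if `b` is injective and `a i < b i` for all `i` in a set `T`,
then the number of strings satisfying all matching constraints is at most
`q ^ (n - |T|)`, because such a string is determined by its values off `T.image b`. -/
lemma matching_count_aux {α : Type*} [Fintype α] [DecidableEq α] {n k : ℕ}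
    (a b : Fin k → Fin n) (hb : Function.Injective b) (T : Finset (Fin k))
    (hT : ∀ i ∈ T, a i < b i) :
    (Finset.univ.filter (fun S : Fin n → α => ∀ i, S (a i) = S (b i))).card
      ≤ Fintype.card α ^ (n - T.card) := by
  set B : Finset (Fin n) := T.image b with hB
  have hBcard : B.card = T.card := Finset.card_image_of_injOn hb.injOn
  have hcompl : (Bᶜ).card = n - T.card := by
    rw [Finset.card_compl, hBcard, Fintype.card_fin]
  -- injection into functions on `Bᶜ`
  have hinj : ∀ S ∈ Finset.univ.filter (fun S : Fin n → α => ∀ i, S (a i) = S (b i)),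
      ∀ S' ∈ Finset.univ.filter (fun S : Fin n → α => ∀ i, S (a i) = S (b i)),
      (fun p : {x // x ∈ Bᶜ} => S p.1) = (fun p : {x // x ∈ Bᶜ} => S' p.1) → S = S' := by
    intro S hS S' hS' hoff
    simp only [Finset.mem_filter] at hS hS'
    have hoff' : ∀ p : Fin n, p ∉ B → S p = S' p := by
      intro p hp
      have := congrFun hoff ⟨p, Finset.mem_compl.mpr hp⟩
      simpa using this
    have key : ∀ m : ℕ, ∀ p : Fin n, p.val < m → S p = S' p := by
      intro m
      induction m with
      | zero => intro p hp; omega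
      | succ m ih =>
        intro p hp
        by_cases hpB : p ∈ B
        · obtain ⟨i, hiT, rfl⟩ := Finset.mem_image.mp hpB
          rw [← hS.2 i, ← hS'.2 i]
          apply ih
          have hlt : (a i : ℕ) < (b i : ℕ) := hT i hiT
          omega
        · exact hoff' p hpB
    funext p
    exact key n p p.isLt
  calc (Finset.univ.filter (fun S : Fin n → α => ∀ i, S (a i) = S (b i))).card
      ≤ (Finset.univ : Finset ({x // x ∈ Bᶜ} → α)).card :=
        Finset.card_le_card_of_injOn (fun S => fun p => S p.1)
          (fun _ _ => Finset.mem_univ _) hinj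
    _ = Fintype.card α ^ (n - T.card) := by
        rw [Finset.card_univ, Fintype.card_fun, Fintype.card_coe, hcompl]

/-- (a) The number of monotone matchings of size `k` between `[n]` and `[n]` with all
pairs off-diagonal is at most `C(n,k)²`.
(b) For a uniformly random string `S ∈ Σⁿ`, any fixed monotone matching of size `k`
with `aᵢ ≠ bᵢ` for all `i` is realized (i.e., `S_{aᵢ} = S_{bᵢ}` for all `i`) with
probability at most `|Σ|^{-⌈k/2⌉}`. -/
theorem matching_count_and_realization_prob {α : Type*} [Fintype α] [DecidableEq α]
    (q : ℕ) (hq : q = Fintype.card α) (hq2 : 2 ≤ q) (n k : ℕ) :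
    (Finset.univ.filter
        (fun p : (Fin k → Fin n) × (Fin k → Fin n) =>
          StrictMono p.1 ∧ StrictMono p.2 ∧ ∀ i, p.1 i ≠ p.2 i)).card
      ≤ (Nat.choose n k) ^ 2 ∧
    ∀ a b : Fin k → Fin n, StrictMono a → StrictMono b → (∀ i, a i ≠ b i) →
      ((Finset.univ.filter
          (fun S : Fin n → α => ∀ i, S (a i) = S (b i))).card : ℝ) / (q : ℝ) ^ n
        ≤ ((q : ℝ)) ^ (-((⌈(k : ℝ) / 2⌉ : ℤ))) := by
  constructor
  · -- part (a)
    have hsub : (Finset.univ.filter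
        (fun p : (Fin k → Fin n) × (Fin k → Fin n) =>
          StrictMono p.1 ∧ StrictMono p.2 ∧ ∀ i, p.1 i ≠ p.2 i))
        ⊆ (Finset.univ.filter (fun f : Fin k → Fin n => StrictMono f)) ×ˢ
          (Finset.univ.filter (fun f : Fin k → Fin n => StrictMono f)) := by
      intro p hp
      simp only [Finset.mem_filter, Finset.mem_product, Finset.mem_univ, true_and] at hp ⊢
      exact ⟨hp.1, hp.2.1⟩
    have hmono : (Finset.univ.filter (fun f : Fin k → Fin n => StrictMono f)).card
        ≤ Nat.choose n k := by
      have hpc : (Finset.powersetCard k (Finset.univ : Finset (Fin n))).card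
          = Nat.choose n k := by
        rw [Finset.card_powersetCard, Finset.card_univ, Fintype.card_fin]
      rw [← hpc]
      apply Finset.card_le_card_of_injOn (fun f => Finset.univ.image f)
      · intro f hf
        simp only [Finset.coe_filter, Set.mem_setOf_eq, Finset.mem_coe, Finset.mem_filter, Finset.mem_univ, true_and] at hf
        simp only [Finset.mem_coe, Finset.mem_powersetCard]
        exact ⟨Finset.subset_univ _, by
          rw [Finset.card_image_of_injective _ hf.injective, Finset.card_univ,
            Fintype.card_fin]⟩
      · intro f hf g hg hfg
        simp only [Finset.coe_filter, Set.mem_setOf_eq, Finset.mem_univ, true_and] at hf hg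
        have hr : Set.range f = Set.range g := by
          rw [← Set.image_univ, ← Set.image_univ, ← Finset.coe_univ, ← Finset.coe_image,
            ← Finset.coe_image]
          exact_mod_cast hfg
        haveI : WellFoundedLT (Fin k) := inferInstance
        exact (StrictMono.range_inj hf hg).mp hr
    calc _ ≤ ((Finset.univ.filter (fun f : Fin k → Fin n => StrictMono f)) ×ˢ
          (Finset.univ.filter (fun f : Fin k → Fin n => StrictMono f))).card :=
          Finset.card_le_card hsub
      _ = (Finset.univ.filter (fun f : Fin k → Fin n => StrictMono f)).card *
          (Finset.univ.filter (fun f : Fin k → Fin n => StrictMono f)).card :=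
          Finset.card_product _ _
      _ ≤ Nat.choose n k * Nat.choose n k := Nat.mul_le_mul hmono hmono
      _ = (Nat.choose n k) ^ 2 := (sq _).symm
  · -- part (b)
    intro a b ha hb hab
    set m : ℕ := (k + 1) / 2 with hm
    -- choose the majority side
    set T : Finset (Fin k) := Finset.univ.filter (fun i => a i < b i) with hT
    have hTc : Tᶜ = Finset.univ.filter (fun i => b i < a i) := by
      ext i
      simp only [Finset.mem_compl, hT, Finset.mem_filter, Finset.mem_univ, true_and]
      constructor
      · intro h; exact lt_of_le_of_ne (not_lt.mp h) (Ne.symm (hab i))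
      · intro h; exact not_lt.mpr h.le
    have hsum : T.card + Tᶜ.card = k := by
      rw [Finset.card_add_card_compl, Fintype.card_fin]
    obtain ⟨t, ht, htk, hcount⟩ :
        ∃ t : ℕ, m ≤ t ∧ t ≤ k ∧
          (Finset.univ.filter (fun S : Fin n → α => ∀ i, S (a i) = S (b i))).card
            ≤ Fintype.card α ^ (n - t) := by
      rcases le_or_gt m T.card with hc | hc
      · refine ⟨T.card, hc, ?_, matching_count_aux a b hb.injective T
          (fun i hi => by simpa [hT] using hi)⟩
        simpa using Finset.card_le_univ T
      · refine ⟨Tᶜ.card, by omega, by simpa using Finset.card_le_univ Tᶜ, ?_⟩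
        have heq : (Finset.univ.filter (fun S : Fin n → α => ∀ i, S (a i) = S (b i)))
            = (Finset.univ.filter (fun S : Fin n → α => ∀ i, S (b i) = S (a i))) := by
          apply Finset.filter_congr
          intro S _
          constructor <;> intro h i <;> exact (h i).symm
        rw [heq]
        exact matching_count_aux b a ha.injective Tᶜ
          (fun i hi => by rw [hTc] at hi; simpa using hi)
    have hq1 : (1 : ℝ) ≤ (q : ℝ) := by exact_mod_cast (by clear hcount; omega : 1 ≤ q)
    have hq0 : (0 : ℝ) < (q : ℝ) := by positivity
    have hceil : (⌈(k : ℝ) / 2⌉ : ℤ) ≤ (m : ℤ) := by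
      rw [Int.ceil_le]
      have h2m : (k : ℝ) ≤ 2 * (m : ℝ) := by exact_mod_cast (by clear hcount; omega : k ≤ 2 * m)
      push_cast
      linarith
    have hkn : k ≤ n := by
      simpa using Fintype.card_le_of_injective a ha.injective
    have htn : t ≤ n := le_trans htk hkn
    have hpow : ((Finset.univ.filter
          (fun S : Fin n → α => ∀ i, S (a i) = S (b i))).card : ℝ)
        ≤ (q : ℝ) ^ (n - t) := by
      rw [hq]
      exact_mod_cast hcount
    rw [div_le_iff₀ (by positivity)]
    have h1 : ((q : ℝ)) ^ (n - t) = (q : ℝ) ^ ((n : ℤ) - (t : ℤ)) := by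
      rw [← zpow_natCast]
      congr 1
      clear hcount hpow
      omega
    have h2 : ((q : ℝ)) ^ (-(⌈(k : ℝ) / 2⌉ : ℤ)) * (q : ℝ) ^ n
        = (q : ℝ) ^ ((n : ℤ) - (⌈(k : ℝ) / 2⌉ : ℤ)) := by
      rw [← zpow_natCast (q : ℝ) n, ← zpow_add₀ (ne_of_gt hq0)]
      ring_nf
    calc ((Finset.univ.filter
          (fun S : Fin n → α => ∀ i, S (a i) = S (b i))).card : ℝ)
        ≤ (q : ℝ) ^ (n - t) := hpow
      _ = (q : ℝ) ^ ((n : ℤ) - (t : ℤ)) := h1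
      _ ≤ (q : ℝ) ^ ((n : ℤ) - (⌈(k : ℝ) / 2⌉ : ℤ)) := by
          apply zpow_le_zpow_right₀ hq1
          clear hcount hpow
          omega
      _ = ((q : ℝ)) ^ (-(⌈(k : ℝ) / 2⌉ : ℤ)) * (q : ℝ) ^ n := h2.symm
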